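/- For all i ≥ 0 and all r > 0, the reverse Bessel polynomial satisfies χ_i(r) = e^r · r^{2i} · ψ_i(r), where ψ_i is defined by ψ_0(r) = e^{-r} and ψ_{i+1}(r) = -(1/r)ψ_i'(r). -/

import Mathlib

/-- The reverse Bessel polynomials. -/
noncomputable def chi : ℕ → Polynomial ℤ
  | 0 => 1
  | 1 => Polynomial.X
  | (i+2) => Polynomial.X ^ 2 * chi i + Polynomial.C (2 * (i : ℤ) + 1) * chi (i+1)

/-- ψ₀(r) = e^{-r}, ψ_{i+1}(r) = -(1/r)·ψ_i'(r). -/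
noncomputable def psi : ℕ → ℝ → ℝ
  | 0 => fun r => Real.exp (-r)
  | (i+1) => fun r => -(1/r) * deriv (psi i) r

open Polynomial in
lemma chi_key : ∀ i : ℕ, chi (i+1) =
    X * chi i - X * derivative (chi i) + C (2 * (i : ℤ)) * chi i
  | 0 => by simp [chi]
  | 1 => by
      show chi 2 = _
      simp only [chi]
      simp [derivative_X]
      ring
  | (i+2) => by
      have h1 := chi_key i
      have h2 := chi_key (i+1)
      show chi (i+3) = _
      have e3 : chi (i+3) = X ^ 2 * chi (i+1) + C (2 * ((i:ℤ)+1) + 1) * chi (i+2) := by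
        show chi (i+1+2) = _
        simp only [chi]
        push_cast
        ring_nf
      have e2 : chi (i+2) = X ^ 2 * chi i + C (2 * (i : ℤ) + 1) * chi (i+1) := by
        simp only [chi]
      rw [e3, e2]
      rw [e2] at h2
      have hd : derivative (X ^ 2 * chi i + C (2 * (i : ℤ) + 1) * chi (i+1)) =
          C 2 * X * chi i + X ^ 2 * derivative (chi i)
            + C (2 * (i : ℤ) + 1) * derivative (chi (i+1)) := by
        simp [derivative_mul, derivative_X_pow]
      rw [hd]
      simp only [Nat.cast_add, Nat.cast_one, C_add, C_mul, C_1, map_ofNat, Nat.cast_ofNat] at h1 h2 ⊢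
      linear_combination (X:ℤ[X])^2 * h1 + ((2:ℤ[X]) * C (i:ℤ) + 1) * h2

lemma psi_eq (i : ℕ) : ∀ r : ℝ, 0 < r →
    psi i r = Real.exp (-r) * Polynomial.aeval r (chi i) / r ^ (2 * i) := by
  induction i with
  | zero => intro r hr; simp [psi, chi]
  | succ i ih =>
    intro r hr
    have hne : r ≠ 0 := ne_of_gt hr
    have hev : psi i =ᶠ[nhds r]
        (fun x => Real.exp (-x) * Polynomial.aeval x (chi i) / x ^ (2 * i)) := by
      filter_upwards [IsOpen.mem_nhds isOpen_Ioi hr] with x hx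
      exact ih x hx
    have hexp : HasDerivAt (fun x : ℝ => Real.exp (-x)) (-Real.exp (-r)) r := by
      simpa [Function.comp_def] using (Real.hasDerivAt_exp (-r)).comp r (hasDerivAt_neg r)
    have hpoly : HasDerivAt (fun x : ℝ => (Polynomial.aeval x (chi i) : ℝ))
        (Polynomial.aeval r (Polynomial.derivative (chi i))) r :=
      (chi i).hasDerivAt_aeval r
    have hpow : HasDerivAt (fun x : ℝ => x ^ (2 * i)) ((2 * i : ℕ) * r ^ (2 * i - 1)) r :=
      hasDerivAt_pow (2 * i) r
    have hg : HasDerivAt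
        (fun x : ℝ => Real.exp (-x) * Polynomial.aeval x (chi i) / x ^ (2 * i))
        (((-Real.exp (-r) * Polynomial.aeval r (chi i)
            + Real.exp (-r) * Polynomial.aeval r (Polynomial.derivative (chi i))) * r ^ (2 * i)
          - Real.exp (-r) * Polynomial.aeval r (chi i) * ((2 * i : ℕ) * r ^ (2 * i - 1)))
          / (r ^ (2 * i)) ^ 2) r :=
      (hexp.mul hpoly).div hpow (pow_ne_zero _ hne)
    have hterm : ((2 * i : ℕ) : ℝ) * r ^ (2 * i - 1) = 2 * i * r ^ (2 * i) / r := by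
      rw [eq_div_iff hne]
      cases i with
      | zero => simp
      | succ j =>
        have hp : r ^ (2*(j+1)) = r ^ (2*(j+1)-1) * r := by
          conv_lhs => rw [show 2*(j+1) = (2*(j+1)-1)+1 from by omega]
          rw [pow_succ]
        rw [hp]
        push_cast
        ring
    have hderiv : deriv (psi i) r =
        ((-Real.exp (-r) * Polynomial.aeval r (chi i)
            + Real.exp (-r) * Polynomial.aeval r (Polynomial.derivative (chi i))) * r ^ (2 * i)
          - Real.exp (-r) * Polynomial.aeval r (chi i) * (2 * i * r ^ (2 * i) / r))
          / (r ^ (2 * i)) ^ 2 := by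
      rw [Filter.EventuallyEq.deriv_eq hev, hg.deriv, hterm]
    show -(1/r) * deriv (psi i) r = _
    rw [hderiv]
    have hkey : (Polynomial.aeval r (chi (i+1)) : ℝ) =
        r * Polynomial.aeval r (chi i)
          - r * Polynomial.aeval r (Polynomial.derivative (chi i))
          + 2 * i * Polynomial.aeval r (chi i) := by
      rw [chi_key i]
      simp only [map_add, map_sub, map_mul, Polynomial.aeval_X, Polynomial.aeval_C, map_ofNat]
      push_cast
      ring
    rw [hkey, show 2 * (i + 1) = 2 * i + 2 from by ring, pow_add]
    have hP : (r : ℝ) ^ (2 * i) ≠ 0 := pow_ne_zero _ hne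
    field_simp
    ring

theorem chi_eq_exp_rpow_psi (i : ℕ) (r : ℝ) (hr : 0 < r) :
    (Polynomial.aeval r (chi i) : ℝ) = Real.exp r * r ^ (2 * i) * psi i r := by
  rw [psi_eq i r hr, Real.exp_neg]
  have hne : r ^ (2 * i) ≠ 0 := pow_ne_zero _ (ne_of_gt hr)
  field_simp
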